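/- arXiv:1707.07836 — 4 statements merged into one kernel-verified Lean document; each statement's English description precedes it below -/
import Mathlib

section
/- Let X be a complex Banach space, T ∈ B(X), e* ∈ X*, λ_n scalars, h_n* ∈ X* with T* h_n* = λ_n h_n* − e*, and Z = {x : h_n*(x) = 0 for all n}. Suppose there is z₀ ∈ Z with e*(z₀) ≠ 0, and set f = T z₀. Then for every z ∈ Z, Tz − (e*(z)/e*(z₀)) f ∈ Z; consequently T(Z) ⊆ Z + span{f}, i.e., Z is almost-invariant for T with defect at most one. -/
open NormedSpace

theorem almost_invariant_defect_one
    (X : Type*) [NormedAddCommGroup X] [NormedSpace ℂ X] [CompleteSpace X]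
    (T : X →L[ℂ] X) (e : StrongDual ℂ X) (lam : ℕ → ℂ) (h : ℕ → StrongDual ℂ X)
    (hadj : ∀ n, (h n).comp T = lam n • h n - e)
    (Z : Submodule ℂ X) (hZ : ∀ x : X, x ∈ Z ↔ ∀ n, h n x = 0)
    (z₀ : X) (hz₀ : z₀ ∈ Z) (hez₀ : e z₀ ≠ 0) (f : X) (hf : f = T z₀) :
    (∀ z ∈ Z, T z - (e z / e z₀) • f ∈ Z) ∧
    (∀ z ∈ Z, T z ∈ Z ⊔ (Submodule.span ℂ {f})) := by
  have key : ∀ z ∈ Z, ∀ n, h n (T z) = - e z := by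
    intro z hz n
    have := congrArg (fun g : StrongDual ℂ X => g z) (hadj n)
    simp only [ContinuousLinearMap.comp_apply, ContinuousLinearMap.sub_apply,
      ContinuousLinearMap.smul_apply, smul_eq_mul] at this
    rw [this, (hZ z).mp hz n]
    ring
  have hmem : ∀ z ∈ Z, T z - (e z / e z₀) • f ∈ Z := by
    intro z hz
    rw [hZ]
    intro n
    have h1 := key z hz n
    have h2 : h n f = - e z₀ := by rw [hf]; exact key z₀ hz₀ n
    simp only [map_sub, map_smul, h1, h2, smul_eq_mul]
    field_simp
    ring
  refine ⟨hmem, fun z hz => ?_⟩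
  have : T z = (T z - (e z / e z₀) • f) + (e z / e z₀) • f := by ring_nf; abel
  rw [this]
  exact Submodule.add_mem_sup (hmem z hz)
    (Submodule.smul_mem _ _ (Submodule.mem_span_singleton_self f))
end

section
/- Let X be a complex Banach space, T ∈ B(X), e* ∈ X* a unit functional, scalars λ_n, and h_n* ∈ X* with T* h_n* = λ_n h_n* − e*, x_n* = h_n*/‖h_n*‖, and a bounded biorthogonal sequence (x_n) ⊆ X with x_i*(x_j) = δ_ij, ‖x_n‖ ≤ M, and Σ_n ‖h_n*‖⁻¹ < ε/M. Then f := Σ_n ‖h_n*‖⁻¹ x_n converges in X, ‖f‖ ≤ ε, and h_n*(f) = 1 for every n. -/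
open NormedSpace

theorem small_norm_vector_construction
    (X : Type*) [NormedAddCommGroup X] [NormedSpace ℂ X] [CompleteSpace X]
    (T : X →L[ℂ] X) (e : StrongDual ℂ X) (he : ‖e‖ = 1)
    (lam : ℕ → ℂ) (h : ℕ → StrongDual ℂ X)
    (hadj : ∀ n, (h n).comp T = lam n • h n - e)
    (hne : ∀ n, h n ≠ 0)
    (xs : ℕ → StrongDual ℂ X) (hxs : ∀ n, xs n = (‖h n‖ : ℂ)⁻¹ • h n)
    (x : ℕ → X) (hbiorth : ∀ i j, xs i (x j) = if i = j then 1 else 0)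
    (M : ℝ) (hM : ∀ n, ‖x n‖ ≤ M)
    (ε : ℝ) (hsum : Summable (fun n => ‖h n‖⁻¹))
    (hlt : ∑' n, ‖h n‖⁻¹ < ε / M) :
    Summable (fun n => (‖h n‖ : ℂ)⁻¹ • x n) ∧
    ‖∑' n, (‖h n‖ : ℂ)⁻¹ • x n‖ ≤ ε ∧
    ∀ n, h n (∑' k, (‖h k‖ : ℂ)⁻¹ • x k) = 1 := by
  have hM0 : 0 < M := by
    have h1 : xs 0 (x 0) = 1 := by simpa using hbiorth 0 0
    have hx0 : x 0 ≠ 0 := by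
      intro h0
      rw [h0, map_zero] at h1
      exact one_ne_zero h1.symm
    exact lt_of_lt_of_le (norm_pos_iff.mpr hx0) (hM 0)
  have hMnn : 0 ≤ M := hM0.le
  have hbound : ∀ n, ‖(‖h n‖ : ℂ)⁻¹ • x n‖ ≤ ‖h n‖⁻¹ * M := by
    intro n
    rw [norm_smul]
    have : ‖((‖h n‖ : ℂ))⁻¹‖ = ‖h n‖⁻¹ := by
      rw [norm_inv, Complex.norm_real, Real.norm_eq_abs, abs_of_nonneg (norm_nonneg _)]
    rw [this]
    exact mul_le_mul_of_nonneg_left (hM n) (inv_nonneg.mpr (norm_nonneg _))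
  have hsumM : Summable (fun n => ‖h n‖⁻¹ * M) := hsum.mul_right M
  have hS : Summable (fun n => (‖h n‖ : ℂ)⁻¹ • x n) :=
    Summable.of_norm_bounded hsumM hbound
  refine ⟨hS, ?_, ?_⟩
  · calc ‖∑' n, (‖h n‖ : ℂ)⁻¹ • x n‖ ≤ ∑' n, ‖h n‖⁻¹ * M :=
          tsum_of_norm_bounded hsumM.hasSum hbound
      _ = (∑' n, ‖h n‖⁻¹) * M := by rw [tsum_mul_right]
      _ ≤ ε := by
          rw [← div_mul_cancel₀ ε hM0.ne']
          exact mul_le_mul_of_nonneg_right hlt.le hMnn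
  · intro n
    have key : ∀ k, h n ((‖h k‖ : ℂ)⁻¹ • x k) = if k = n then 1 else 0 := by
      intro k
      have hn : (h n) (x k) = (‖h n‖ : ℂ) * xs n (x k) := by
        rw [hxs n]
        simp only [ContinuousLinearMap.smul_apply, smul_eq_mul]
        rw [← mul_assoc, mul_inv_cancel₀, one_mul]
        exact_mod_cast norm_ne_zero_iff.mpr (hne n)
      rw [map_smul, smul_eq_mul, hn, hbiorth]
      by_cases hkn : k = n
      · subst hkn
        have hk0 : (‖h k‖ : ℂ) ≠ 0 := by
          exact_mod_cast norm_ne_zero_iff.mpr (hne k)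
        simp [inv_mul_cancel_left₀ hk0, inv_mul_cancel₀ hk0]
      · rw [if_neg (Ne.symm hkn), if_neg hkn]
        ring
    rw [(h n).map_tsum hS]
    simp_rw [key]
    rw [tsum_eq_single n (fun k hk => if_neg hk)]
    simp
end

section
/- Let X be a complex Banach space and T ∈ B(X) a bounded operator whose kernel N is finite-dimensional with basis {f_1,…,f_n}, and whose closed range R has finite codimension with complement Z spanned by {g_1,…,g_m}, with n ≤ m and X = N ⊕ Y. Define G : X → X by G(f_i) = g_i for 1 ≤ i ≤ n and G|_Y = 0. Then for every nonzero scalar α, the operator T + αG is injective. -/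
theorem perturbation_injective
    (X : Type*) [NormedAddCommGroup X] [NormedSpace ℂ X] [CompleteSpace X]
    (T : X →L[ℂ] X)
    (N Y R Z : Submodule ℂ X)
    (hN : N = LinearMap.ker T.toLinearMap)
    (hR : R = (LinearMap.range T.toLinearMap).topologicalClosure)
    (hNY : IsCompl N Y)
    (hRZ : IsCompl R Z)
    (n m : ℕ) (hnm : n ≤ m)
    (fb : Module.Basis (Fin n) ℂ N) (gb : Module.Basis (Fin m) ℂ Z)
    (G : X →L[ℂ] X)
    (hGf : ∀ i : Fin n, G (fb i) = gb (Fin.castLE hnm i))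
    (hGY : ∀ y ∈ Y, G y = 0) :
    ∀ α : ℂ, α ≠ 0 → Function.Injective (T + α • G) := by
  intro α hα
  rw [injective_iff_map_eq_zero]
  intro x hx
  have hxmem : x ∈ N ⊔ Y := hNY.sup_eq_top ▸ Submodule.mem_top
  obtain ⟨v, hv, y, hy, rfl⟩ := Submodule.mem_sup.mp hxmem
  set c : Fin n → ℂ := fun i => fb.repr ⟨v, hv⟩ i with hc
  have hv_eq : v = ∑ i, c i • (fb i : X) := by
    have h := fb.sum_repr ⟨v, hv⟩
    have := congrArg (Submodule.subtype N) h
    simp only [map_sum, map_smul, Submodule.subtype_apply] at this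
    exact this.symm
  have hTv : T v = 0 := by
    have : v ∈ LinearMap.ker T.toLinearMap := hN ▸ hv
    simpa using this
  have hGv : G v = ∑ i, c i • (gb (Fin.castLE hnm i) : X) := by
    rw [hv_eq, map_sum]
    simp [hGf]
  have heq : T y + α • G v = 0 := by
    have hGy : G y = 0 := hGY y hy
    simpa [map_add, hTv, hGy, add_comm] using hx
  have hGvZ : G v ∈ Z := by
    rw [hGv]
    exact Submodule.sum_mem _ fun i _ => Submodule.smul_mem _ _ (gb (Fin.castLE hnm i)).2
  have hTyR : T y ∈ R := by
    rw [hR]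
    exact Submodule.le_topologicalClosure _ ⟨y, rfl⟩
  have hTyZ : T y ∈ Z := by
    have : T y = -(α • G v) := by linear_combination (norm := module) heq
    rw [this]
    exact Submodule.neg_mem _ (Submodule.smul_mem _ _ hGvZ)
  have hTy0 : T y = 0 := by
    have := hRZ.disjoint.le_bot ⟨hTyR, hTyZ⟩
    simpa using this
  have hGv0 : G v = 0 := by
    have hαG : α • G v = 0 := by
      rw [hTy0, zero_add] at heq; exact heq
    exact (smul_eq_zero.mp hαG).resolve_left hα
  -- conclude c = 0
  have hz : (∑ i, c i • gb (Fin.castLE hnm i)) = (0 : Z) := by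
    apply Subtype.ext
    push_cast
    rw [← hGv]
    exact hGv0
  have hc0 : ∀ i, c i = 0 := by
    intro i
    have := congrArg (fun w => gb.repr w (Fin.castLE hnm i)) hz
    simpa [map_sum, Finsupp.single_apply, Fin.castLE_inj,
      Finset.sum_ite_eq'] using this
  have hv0 : v = 0 := by
    rw [hv_eq]
    simp [hc0]
  have hy0 : y = 0 := by
    have hyN : y ∈ N := by
      rw [hN]; simpa using hTy0
    have := hNY.disjoint.le_bot ⟨hyN, hy⟩
    simpa using this
  rw [hv0, hy0, add_zero]
end

section
/- Let X be a Banach space, T ∈ B(X), and z ∈ X a vector whose orbit (T^n z)_{n≥0} is not a minimal sequence. Let p be the smallest index such that T^p z belongs to the closed span of {T^n z : n ≠ p}. Then T^p z belongs to the closed span of {T^n z : n > p}. -/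
theorem minimal_index_orbit
    (X : Type*) [NormedAddCommGroup X] [NormedSpace ℂ X] [CompleteSpace X]
    (T : X →L[ℂ] X) (z : X) (p : ℕ)
    (hp : (T ^ p) z ∈
      (Submodule.span ℂ ((fun n => (T ^ n) z) '' {n : ℕ | n ≠ p})).topologicalClosure)
    (hmin : ∀ q < p, (T ^ q) z ∉
      (Submodule.span ℂ ((fun n => (T ^ n) z) '' {n : ℕ | n ≠ q})).topologicalClosure) :
    (T ^ p) z ∈
      (Submodule.span ℂ ((fun n => (T ^ n) z) '' {n : ℕ | p < n})).topologicalClosure := by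
  set v : ℕ → X := fun n => (T ^ n) z with hv
  set F : Submodule ℂ X := (Submodule.span ℂ (v '' {n : ℕ | p < n})).topologicalClosure with hF
  haveI hFc : IsClosed (F : Set X) := Submodule.isClosed_topologicalClosure _
  -- quotient map
  set π : X →ₗ[ℂ] X ⧸ F := F.mkQ with hπ
  have hπcont : Continuous π := F.isOpenQuotientMap_mkQ.continuous
  -- finite-dimensional span in quotient
  set W : Submodule ℂ (X ⧸ F) := Submodule.span ℂ ((fun n => π (v n)) '' Set.Iio p) with hW
  haveI : FiniteDimensional ℂ W :=
    FiniteDimensional.span_of_finite ℂ ((Set.finite_Iio p).image _)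
  have hWclosed : IsClosed (W : Set (X ⧸ F)) := Submodule.closed_of_finiteDimensional W
  -- π (v p) ∈ W
  have hmaple : Submodule.map π (Submodule.span ℂ (v '' {n : ℕ | n ≠ p})) ≤ W := by
    rw [Submodule.map_span]
    apply Submodule.span_le.mpr
    rintro _ ⟨_, ⟨n, hn, rfl⟩, rfl⟩
    rcases lt_trichotomy n p with h | h | h
    · exact Submodule.subset_span ⟨n, h, rfl⟩
    · exact absurd h hn
    · have hnF : v n ∈ F :=
        (Submodule.span ℂ (v '' {n : ℕ | p < n})).le_topologicalClosure
          (Submodule.subset_span ⟨n, h, rfl⟩)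
      have h0 : π (v n) = 0 := (Submodule.Quotient.mk_eq_zero F).mpr hnF
      rw [h0]; exact W.zero_mem
  have hπvp : π (v p) ∈ W := by
    have h1 : π (v p) ∈ closure (π '' ((Submodule.span ℂ (v '' {n : ℕ | n ≠ p})) : Set X)) :=
      image_closure_subset_closure_image hπcont ⟨v p, hp, rfl⟩
    have h2 : closure (π '' ((Submodule.span ℂ (v '' {n : ℕ | n ≠ p})) : Set X))
        ⊆ (W : Set (X ⧸ F)) := by
      refine closure_minimal ?_ hWclosed
      rintro _ ⟨x, hx, rfl⟩
      exact hmaple ⟨x, hx, rfl⟩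
    exact h2 h1
  -- extract finite linear combination
  rw [hW, Finsupp.mem_span_image_iff_linearCombination] at hπvp
  obtain ⟨c, hcsupp, hcsum⟩ := hπvp
  have h0 : π (v p - ∑ n ∈ c.support, c n • v n) = 0 := by
    rw [map_sub, map_sum, sub_eq_zero, ← hcsum, Finsupp.linearCombination_apply, Finsupp.sum]
    simp [map_smul]
  have hker : v p - ∑ n ∈ c.support, c n • v n ∈ F := by
    rw [← Submodule.ker_mkQ F]
    exact LinearMap.mem_ker.mpr h0
  by_cases hs : c.support.Nonempty
  · exfalso
    set q := c.support.max' hs with hq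
    have hqmem : q ∈ c.support := c.support.max'_mem hs
    have hqp : q < p := (Finsupp.mem_supported ℂ c).mp hcsupp hqmem
    have hcq : c q ≠ 0 := Finsupp.mem_support_iff.mp hqmem
    set K : Submodule ℂ X :=
      (Submodule.span ℂ (v '' {n : ℕ | n ≠ q})).topologicalClosure with hK
    have hgen : ∀ n, n ≠ q → v n ∈ K :=
      fun n hn => (Submodule.span ℂ (v '' {n : ℕ | n ≠ q})).le_topologicalClosure
        (Submodule.subset_span ⟨n, hn, rfl⟩)
    have hFK : F ≤ K := by
      apply Submodule.topologicalClosure_mono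
      apply Submodule.span_mono
      apply Set.image_mono
      intro n hn
      simp only [Set.mem_setOf_eq] at hn ⊢
      omega
    have hsplit : ∑ n ∈ c.support, c n • v n
        = c q • v q + ∑ n ∈ c.support.erase q, c n • v n :=
      (Finset.add_sum_erase _ _ hqmem).symm
    have hvq : c q • v q = v p - (v p - ∑ n ∈ c.support, c n • v n)
        - ∑ n ∈ c.support.erase q, c n • v n := by
      rw [hsplit]; abel
    have hmem : c q • v q ∈ K := by
      rw [hvq]
      refine K.sub_mem (K.sub_mem ?_ ?_) ?_
      · exact hgen p (Nat.ne_of_gt hqp)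
      · exact hFK hker
      · exact K.sum_mem fun n hn =>
          K.smul_mem _ (hgen n (Finset.ne_of_mem_erase hn))
    have hvqK : v q ∈ K := by
      have h2 := K.smul_mem (c q)⁻¹ hmem
      rwa [inv_smul_smul₀ hcq] at h2
    exact hmin q hqp hvqK
  · rw [Finset.not_nonempty_iff_eq_empty] at hs
    rw [hs, Finset.sum_empty, sub_zero] at hker
    exact hker
end
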